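/- Let Γ be the one-skeleton of a 3-dimensional manifold with faces homeomorphic to D³. If p and q are two vertices of Γ that do not lie on a common facet, then Γ \ {p, q} is connected. -/

import Mathlib

/-- Combinatorial data of the one-skeleton `Γ` of a 3-dimensional manifold with faces `Q`
homeomorphic to the 3-disk `D³`.  `Γ` is a 3-regular graph embedded in the boundary
2-sphere `∂Q = S²` (hence planar, which is recorded by Euler's formula for the embedding),
`Facets` is the set of facets of `Q`, each facet being a cycle (connected 2-valent
subgraph) recorded by its vertex set; every vertex lies on exactly 3 facets, every edge
on exactly 2 facets, and the niceness of `Q` forces any two distinct facets to meet in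
at most a vertex or an edge. -/
structure DiskFaceGraph (V : Type) [Fintype V] [DecidableEq V] where
  G : SimpleGraph V
  regular : ∀ v : V, {w : V | G.Adj v w}.ncard = 3
  connected : G.Connected
  Facets : Finset (Finset V)
  facet_card : ∀ F ∈ Facets, 3 ≤ F.card
  facet_conn : ∀ F ∈ Facets, (G.induce (F : Set V)).Connected
  facet_two_valent : ∀ F ∈ Facets, ∀ v ∈ F, {w : V | w ∈ F ∧ G.Adj v w}.ncard = 2
  vertex_facets : ∀ v : V, {F ∈ Facets | v ∈ F}.card = 3
  edge_facets : ∀ v w : V, G.Adj v w → {F ∈ Facets | v ∈ F ∧ w ∈ F}.card = 2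
  nice : ∀ F₁ ∈ Facets, ∀ F₂ ∈ Facets, F₁ ≠ F₂ →
    (F₁ ∩ F₂).card ≤ 2 ∧ ∀ v ∈ F₁ ∩ F₂, ∀ w ∈ F₁ ∩ F₂, v ≠ w → G.Adj v w
  euler : (Fintype.card V : ℤ) - (G.edgeSet.ncard : ℤ) + (Facets.card : ℤ) = 2

set_option linter.unusedSectionVars false

open Finset

section AuxSRel

variable {V : Type} [Fintype V] [DecidableEq V]

/-- Reachability within a vertex set `S`, as a reflexive-transitive closure. -/
def SRel (G : SimpleGraph V) (S : Set V) : V → V → Prop :=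
  Relation.ReflTransGen (fun a b => G.Adj a b ∧ a ∈ S ∧ b ∈ S)

lemma srel_symm {G : SimpleGraph V} {S : Set V} {a b : V} (h : SRel G S a b) :
    SRel G S b a :=
  (@Relation.ReflTransGen.symmetric _ _
    ⟨fun _ _ hx => ⟨hx.1.symm, hx.2.2, hx.2.1⟩⟩).symm _ _ h

lemma srel_trans {G : SimpleGraph V} {S : Set V} {a b c : V} (h1 : SRel G S a b)
    (h2 : SRel G S b c) : SRel G S a c :=
  Relation.ReflTransGen.trans h1 h2

lemma srel_mono {G : SimpleGraph V} {S T : Set V} (hST : S ⊆ T) {a b : V}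
    (h : SRel G S a b) : SRel G T a b :=
  Relation.ReflTransGen.mono (p := fun a b => G.Adj a b ∧ a ∈ T ∧ b ∈ T)
    (fun _ _ hx => ⟨hx.1, hST hx.2.1, hST hx.2.2⟩) _ _ h

lemma srel_reachable {G : SimpleGraph V} {S : Set V} {a b : V} (ha : a ∈ S)
    (hr : SRel G S a b) :
    ∀ hb : b ∈ S, (G.induce S).Reachable ⟨a, ha⟩ ⟨b, hb⟩ := by
  induction hr with
  | refl => exact fun hb => SimpleGraph.Reachable.refl _
  | tail _ hstep ih =>
    intro hb
    exact (ih hstep.2.1).trans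
      (SimpleGraph.Adj.reachable (by exact hstep.1))

lemma connected_of_srel {G : SimpleGraph V} {S : Set V} (hne : S.Nonempty)
    (h : ∀ a ∈ S, ∀ b ∈ S, SRel G S a b) : (G.induce S).Connected := by
  rw [SimpleGraph.connected_iff]
  refine ⟨fun u v => ?_, ⟨⟨hne.choose, hne.choose_spec⟩⟩⟩
  obtain ⟨a, ha⟩ := u
  obtain ⟨b, hb⟩ := v
  exact srel_reachable ha (h a ha b hb) hb

lemma srel_of_reachable {G : SimpleGraph V} {S : Set V} {a b : ↥S}
    (h : (G.induce S).Reachable a b) : SRel G S a.1 b.1 := by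
  obtain ⟨w⟩ := h
  induction w with
  | nil => exact Relation.ReflTransGen.refl
  | @cons u v _ hadj _ ih =>
    exact Relation.ReflTransGen.head ⟨hadj, u.2, v.2⟩ ih

/-- Parity: the sum over `z ∈ C` of the number of `G`-neighbours of `z` inside `C` is even. -/
lemma even_sum_adj (G : SimpleGraph V) [DecidableRel G.Adj] (C : Finset V) :
    Even (∑ z ∈ C, (C.filter (fun w => G.Adj z w)).card) := by
  classical
  let H : SimpleGraph ↥C := G.comap (fun z => (z : V))
  haveI : DecidableRel H.Adj := fun a b => by
    simp only [H, SimpleGraph.comap_adj]; infer_instance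
  have hdeg : ∀ v : ↥C, H.degree v = (C.filter (fun w => G.Adj v.1 w)).card := by
    intro v
    rw [SimpleGraph.degree]
    refine Finset.card_bij (fun w _ => (w : V)) ?_ ?_ ?_
    · intro w hw
      rw [SimpleGraph.mem_neighborFinset] at hw
      exact Finset.mem_filter.mpr ⟨w.2, hw⟩
    · intro w1 _ w2 _ hh
      exact Subtype.ext hh
    · intro w hw
      rw [Finset.mem_filter] at hw
      exact ⟨⟨w, hw.1⟩, (H.mem_neighborFinset _ _).mpr hw.2, rfl⟩
  have h3 : ∑ z ∈ C, (C.filter (fun w => G.Adj z w)).card = ∑ v : ↥C, H.degree v := by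
    rw [show (∑ v : ↥C, H.degree v) = ∑ v : ↥C, (C.filter (fun w => G.Adj v.1 w)).card
      from Finset.sum_congr rfl (fun v _ => hdeg v)]
    rw [Finset.sum_coe_sort C (fun z => (C.filter (fun w => G.Adj z w)).card)]
  rw [h3, SimpleGraph.sum_degrees_eq_twice_card_edges]
  exact even_two_mul _

end AuxSRel

section DFG

variable {V : Type} [Fintype V] [DecidableEq V]

lemma dfg_two_valent (D : DiskFaceGraph V) [DecidableRel D.G.Adj] {F : Finset V}
    (hF : F ∈ D.Facets) {v : V} (hv : v ∈ F) :
    (F.filter (fun w => D.G.Adj v w)).card = 2 := by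
  have h := D.facet_two_valent F hF v hv
  rw [show {w : V | w ∈ F ∧ D.G.Adj v w} = ↑(F.filter (fun w => D.G.Adj v w)) by
    ext w; simp] at h
  rwa [Set.ncard_coe_finset] at h

lemma dfg_not_adj (D : DiskFaceGraph V) {p q : V}
    (h : ∀ F ∈ D.Facets, ¬(p ∈ F ∧ q ∈ F)) : ¬ D.G.Adj p q := by
  intro hadj
  have h2 := D.edge_facets p q hadj
  have hpos : 0 < ({F ∈ D.Facets | p ∈ F ∧ q ∈ F}).card := by omega
  obtain ⟨F, hF⟩ := Finset.card_pos.mp hpos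
  rw [Finset.mem_filter] at hF
  exact h F hF.1 hF.2

lemma dfg_pair_facet (D : DiskFaceGraph V) {p u w : V} (hu : D.G.Adj p u)
    (hw : D.G.Adj p w) (huw : u ≠ w) : ∃ F ∈ D.Facets, p ∈ F ∧ u ∈ F ∧ w ∈ F := by
  by_contra hcon
  push_neg at hcon
  have hu2 := D.edge_facets p u hu
  have hw2 := D.edge_facets p w hw
  have hp3 := D.vertex_facets p
  set Au := {F ∈ D.Facets | p ∈ F ∧ u ∈ F} with hAu
  set Aw := {F ∈ D.Facets | p ∈ F ∧ w ∈ F} with hAw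
  have hdisj : Disjoint Au Aw := by
    rw [Finset.disjoint_left]
    intro F hFu hFw
    rw [hAu, Finset.mem_filter] at hFu
    rw [hAw, Finset.mem_filter] at hFw
    exact hcon F hFu.1 hFu.2.1 hFu.2.2 hFw.2.2
  have hsub : Au ∪ Aw ⊆ {F ∈ D.Facets | p ∈ F} := by
    intro F hFm
    rcases Finset.mem_union.mp hFm with hh | hh
    · rw [hAu, Finset.mem_filter] at hh
      exact Finset.mem_filter.mpr ⟨hh.1, hh.2.1⟩
    · rw [hAw, Finset.mem_filter] at hh
      exact Finset.mem_filter.mpr ⟨hh.1, hh.2.1⟩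
  have hle := Finset.card_le_card hsub
  rw [Finset.card_union_of_disjoint hdisj, hu2, hw2, hp3] at hle
  omega

lemma dfg_facet_erase_connected (D : DiskFaceGraph V) {F : Finset V} (hF : F ∈ D.Facets)
    {p : V} (hp : p ∈ F) {a b : V} (ha : a ∈ F) (hb : b ∈ F) (hap : a ≠ p) (hbp : b ≠ p) :
    SRel D.G ((↑F : Set V) \ {p}) a b := by
  classical
  set T : Set V := (↑F : Set V) \ {p} with hT
  have hmemT : ∀ z : V, z ∈ F → z ≠ p → z ∈ T := by
    intro z hz hzp
    exact Set.mem_diff_singleton.mpr ⟨hz, hzp⟩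
  -- the two neighbours of p in F
  obtain ⟨x, y, hxy, hNxy⟩ := Finset.card_eq_two.mp (dfg_two_valent D hF hp)
  have hxN : x ∈ F.filter (fun w => D.G.Adj p w) := by rw [hNxy]; simp
  have hyN : y ∈ F.filter (fun w => D.G.Adj p w) := by rw [hNxy]; simp
  rw [Finset.mem_filter] at hxN hyN
  have hxp : x ≠ p := fun hh => (D.G.irrefl (hh ▸ hxN.2))
  have hyp : y ≠ p := fun hh => (D.G.irrefl (hh ▸ hyN.2))
  -- Claim A : every vertex of F other than p reaches x or y within T
  have claimA : ∀ c ∈ F, c ≠ p → SRel D.G T c x ∨ SRel D.G T c y := by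
    intro c hc
    have hreach : SRel D.G (↑F : Set V) c p :=
      srel_of_reachable (a := ⟨c, hc⟩) (b := ⟨p, hp⟩)
        ((D.facet_conn F hF).preconnected _ _)
    unfold SRel at hreach
    refine Relation.ReflTransGen.head_induction_on
      (motive := fun a _ => a ≠ p → SRel D.G T a x ∨ SRel D.G T a y) hreach
      (fun hcp => absurd rfl hcp) ?_
    intro a' c' hstep htail ih hap'
    by_cases hcp' : c' = p
    · have hmm : a' ∈ F.filter (fun w => D.G.Adj p w) :=
        Finset.mem_filter.mpr ⟨hstep.2.1, (hcp' ▸ hstep.1).symm⟩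
      rw [hNxy] at hmm
      rcases Finset.mem_insert.mp hmm with rfl | hmem
      · exact Or.inl Relation.ReflTransGen.refl
      · rw [Finset.mem_singleton] at hmem
        subst hmem
        exact Or.inr Relation.ReflTransGen.refl
    · have hstep' : D.G.Adj a' c' ∧ a' ∈ T ∧ c' ∈ T :=
        ⟨hstep.1, hmemT a' hstep.2.1 hap', hmemT c' hstep.2.2 hcp'⟩
      rcases ih hcp' with hh | hh
      · exact Or.inl (Relation.ReflTransGen.head hstep' hh)
      · exact Or.inr (Relation.ReflTransGen.head hstep' hh)
  -- Claim B : x and y are connected within T (parity argument)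
  have claimB : SRel D.G T x y := by
    by_contra hxy'
    set C := F.filter (fun z => z ≠ p ∧ SRel D.G T x z) with hC
    have hxC : x ∈ C :=
      Finset.mem_filter.mpr ⟨hxN.1, hxp, Relation.ReflTransGen.refl⟩
    have hyC : y ∉ C := fun hy => hxy' ((Finset.mem_filter.mp hy).2.2)
    have hCF : ∀ z ∈ C, z ∈ F := fun z hz => (Finset.mem_filter.mp hz).1
    -- neighbour count inside C
    have hdeg : ∀ z ∈ C, (C.filter (fun w => D.G.Adj z w)).card
        = if z = x then 1 else 2 := by
      intro z hz
      obtain ⟨hzF, hzp, hzrel⟩ :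
          z ∈ F ∧ z ≠ p ∧ SRel D.G T x z := by
        have := Finset.mem_filter.mp hz; exact ⟨this.1, this.2⟩
      have hfe : C.filter (fun w => D.G.Adj z w)
          = (F.filter (fun w => D.G.Adj z w)).erase p := by
        ext w
        simp only [Finset.mem_filter, Finset.mem_erase, hC]
        constructor
        · rintro ⟨⟨hwF, hwp, _⟩, hadj⟩
          exact ⟨hwp, hwF, hadj⟩
        · rintro ⟨hwp, hwF, hadj⟩
          exact ⟨⟨hwF, hwp,
            hzrel.tail ⟨hadj, hmemT z hzF hzp, hmemT w hwF hwp⟩⟩, hadj⟩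
      have hcard2 := dfg_two_valent D hF hzF
      have hadj_p_iff : D.G.Adj z p ↔ z = x := by
        constructor
        · intro hadj
          have : z ∈ F.filter (fun w => D.G.Adj p w) :=
            Finset.mem_filter.mpr ⟨hzF, hadj.symm⟩
          rw [hNxy] at this
          rcases Finset.mem_insert.mp this with rfl | hmem
          · rfl
          · rw [Finset.mem_singleton] at hmem
            exact absurd (hmem ▸ hz) hyC
        · rintro rfl
          exact hxN.2.symm
      rw [hfe]
      by_cases hzx : z = x
      · have hpmem : p ∈ F.filter (fun w => D.G.Adj z w) :=
          Finset.mem_filter.mpr ⟨hp, hadj_p_iff.mpr hzx⟩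
        rw [Finset.card_erase_of_mem hpmem, hcard2, if_pos hzx]
      · have hpmem : p ∉ F.filter (fun w => D.G.Adj z w) := by
          rw [Finset.mem_filter]
          rintro ⟨-, hadj⟩
          exact hzx (hadj_p_iff.mp hadj)
        rw [Finset.erase_eq_of_notMem hpmem, hcard2, if_neg hzx]
    -- the sum of these counts is odd, contradicting parity
    have heven := even_sum_adj D.G C
    rw [Finset.sum_congr rfl hdeg] at heven
    rw [← Finset.add_sum_erase C _ hxC, if_pos rfl] at heven
    rw [Finset.sum_congr rfl
      (fun z hz => if_neg (Finset.ne_of_mem_erase hz))] at heven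
    rw [Finset.sum_const, smul_eq_mul] at heven
    obtain ⟨k, hk⟩ := heven
    omega
  -- combine
  rcases claimA a ha hap with hA | hA <;> rcases claimA b hb hbp with hB | hB
  · exact srel_trans hA (srel_symm hB)
  · exact srel_trans hA (srel_trans claimB (srel_symm hB))
  · exact srel_trans hA (srel_trans (srel_symm claimB) (srel_symm hB))
  · exact srel_trans hA (srel_symm hB)

lemma dfg_bridge (D : DiskFaceGraph V) {p q a d : V}
    (h : ∀ F ∈ D.Facets, ¬(p ∈ F ∧ q ∈ F))
    (ha : D.G.Adj p a) (hd : D.G.Adj p d) :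
    SRel D.G {v : V | v ≠ p ∧ v ≠ q} a d := by
  rcases eq_or_ne a d with rfl | hne
  · exact Relation.ReflTransGen.refl
  obtain ⟨F, hF, hpF, haF, hdF⟩ := dfg_pair_facet D ha hd hne
  have hqF : q ∉ F := fun hq => h F hF ⟨hpF, hq⟩
  have hsub : (↑F : Set V) \ {p} ⊆ {v : V | v ≠ p ∧ v ≠ q} := by
    rintro z ⟨hzF, hzp⟩
    exact ⟨by simpa using hzp, fun hzq => hqF (by exact_mod_cast hzq ▸ hzF)⟩
  exact srel_mono hsub (dfg_facet_erase_connected D hF hpF haF hdF ha.ne' hd.ne')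

end DFG

lemma dfg_walk_srel {V : Type} [Fintype V] [DecidableEq V] (D : DiskFaceGraph V)
    (p q : V) (h : ∀ F ∈ D.Facets, ¬(p ∈ F ∧ q ∈ F)) :
    ∀ n : ℕ, ∀ a b : V, ∀ wk : D.G.Walk a b, wk.length = n →
      a ∈ {v : V | v ≠ p ∧ v ≠ q} → b ∈ {v : V | v ≠ p ∧ v ≠ q} →
      SRel D.G {v : V | v ≠ p ∧ v ≠ q} a b := by
  set S : Set V := {v : V | v ≠ p ∧ v ≠ q} with hS
  have hnadj : ¬ D.G.Adj p q := dfg_not_adj D h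
  have hq' : ∀ F ∈ D.Facets, ¬(q ∈ F ∧ p ∈ F) := fun F hF hc => h F hF ⟨hc.2, hc.1⟩
  have hsets : {v : V | v ≠ q ∧ v ≠ p} = S := by
    ext v; exact and_comm
  have hmemp : ∀ z : V, D.G.Adj p z → z ∈ S :=
    fun z hz => ⟨hz.ne', fun hzq => hnadj (hzq ▸ hz)⟩
  have hmemq : ∀ z : V, D.G.Adj q z → z ∈ S :=
    fun z hz => ⟨fun hzp => hnadj (hzp ▸ hz).symm, hz.ne'⟩
  intro n
  induction n using Nat.strong_induction_on with
  | _ n ih =>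
    intro a b wk hlen ha hb
    cases wk with
    | nil => exact Relation.ReflTransGen.refl
    | @cons _ c _ hadj rest =>
      rw [SimpleGraph.Walk.length_cons] at hlen
      by_cases hc : c ∈ S
      · exact Relation.ReflTransGen.head ⟨hadj, ha, hc⟩
          (ih rest.length (by omega) c b rest rfl hc hb)
      · cases rest with
        | nil => exact absurd hb hc
        | @cons _ d _ hadj2 rest2 =>
          rw [SimpleGraph.Walk.length_cons] at hlen
          simp only [hS, Set.mem_setOf_eq, not_and_or, not_ne_iff] at hc
          rcases hc with rfl | rfl
          · have hd : d ∈ S := hmemp d hadj2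
            exact srel_trans (dfg_bridge D h hadj.symm hadj2)
              (ih rest2.length (by omega) d b rest2 rfl hd hb)
          · have hd : d ∈ S := hmemq d hadj2
            have hbr := dfg_bridge D hq' hadj.symm hadj2
            rw [hsets] at hbr
            exact srel_trans hbr
              (ih rest2.length (by omega) d b rest2 rfl hd hb)

/-- if `p` and `q` are vertices of the one-skeleton `Γ` of a 3-dimensional
manifold with faces `Q ≅ D³` which do not lie on a common facet, then `Γ \ {p, q}`
is connected. -/
theorem stmt1 {V : Type} [Fintype V] [DecidableEq V] (D : DiskFaceGraph V) (p q : V)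
    (hpq : p ≠ q) (h : ∀ F ∈ D.Facets, ¬(p ∈ F ∧ q ∈ F)) :
    (D.G.induce {v : V | v ≠ p ∧ v ≠ q}).Connected := by
  have hnadj : ¬ D.G.Adj p q := dfg_not_adj D h
  have hmemp : ∀ z : V, D.G.Adj p z → z ∈ {v : V | v ≠ p ∧ v ≠ q} :=
    fun z hz => ⟨hz.ne', fun hzq => hnadj (hzq ▸ hz)⟩
  have h3 := D.regular p
  have hne : {w : V | D.G.Adj p w}.Nonempty := by
    rcases Set.eq_empty_or_nonempty {w : V | D.G.Adj p w} with he | hne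
    · rw [he, Set.ncard_empty] at h3; simp at h3
    · exact hne
  obtain ⟨u0, hu0⟩ := hne
  refine connected_of_srel ⟨u0, hmemp u0 hu0⟩ ?_
  intro a ha b hb
  obtain ⟨wk⟩ := D.connected.preconnected a b
  exact dfg_walk_srel D p q h wk.length a b wk rfl ha hb
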